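/- arXiv:1908.00383 — 3 statements merged into one kernel-verified Lean document; each statement's English description precedes it below -/
import Mathlib

section
/- Let p be an odd prime and t an integer with t ≢ 0 (mod p) and t⁴ - 2(a+b)t² + (a-b)² ≡ 0 (mod p). Then r = (t² + a - b)·(2t)⁻¹ (mod p) satisfies r² ≡ a (mod p). -/
theorem r_is_sqrt_a (p : ℕ) (hp : p.Prime) (hodd : p ≠ 2) (a b t u : ℤ)
    (ht : ¬ (p : ℤ) ∣ t)
    (hf : t ^ 4 - 2 * (a + b) * t ^ 2 + (a - b) ^ 2 ≡ 0 [ZMOD (p : ℤ)])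
    (hu : 2 * t * u ≡ 1 [ZMOD (p : ℤ)]) :
    ((t ^ 2 + a - b) * u) ^ 2 ≡ a [ZMOD (p : ℤ)] := by
  have h2 := hf.mul_right (u ^ 2)
  have h3 := (hu.mul hu).mul_left a
  have key : ((t ^ 2 + a - b) * u) ^ 2 =
      (t ^ 4 - 2 * (a + b) * t ^ 2 + (a - b) ^ 2) * u ^ 2 +
        a * ((2 * t * u) * (2 * t * u)) := by ring
  rw [key]
  simpa using h2.add h3
end

section
/- Let p be an odd prime and t an integer with t ≢ 0 (mod p) and t⁴ - 2(a+b)t² + (a-b)² ≡ 0 (mod p). Then s = (t² - a + b)·(2t)⁻¹ (mod p) satisfies s² ≡ b (mod p), and moreover r + s ≡ t (mod p) where r = (t² + a - b)·(2t)⁻¹. -/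
theorem s_is_sqrt_b_and_sum (p : ℕ) (hp : p.Prime) (hodd : p ≠ 2) (a b t u : ℤ)
    (ht : ¬ (p : ℤ) ∣ t)
    (hf : t ^ 4 - 2 * (a + b) * t ^ 2 + (a - b) ^ 2 ≡ 0 [ZMOD (p : ℤ)])
    (hu : 2 * t * u ≡ 1 [ZMOD (p : ℤ)]) :
    ((t ^ 2 - a + b) * u) ^ 2 ≡ b [ZMOD (p : ℤ)] ∧
      (t ^ 2 + a - b) * u + (t ^ 2 - a + b) * u ≡ t [ZMOD (p : ℤ)] := by
  obtain ⟨k, hk⟩ := (Int.modEq_iff_dvd.mp hf)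
  obtain ⟨m, hm⟩ := (Int.modEq_iff_dvd.mp hu)
  constructor
  · rw [Int.modEq_iff_dvd]
    exact ⟨u ^ 2 * k + b * m * (1 + 2 * t * u), by linear_combination (u^2) * hk + (b * (1 + 2*t*u)) * hm⟩
  · rw [Int.modEq_iff_dvd]
    exact ⟨t * m, by linear_combination t * hm⟩
end

section
/- Let p be an odd prime, t ≢ 0 (mod p) with t⁴ - 2(a+b)t² + (a-b)² ≡ 0 (mod p). Suppose r, s, r', s' are integers with r² ≡ r'² ≡ a, s² ≡ s'² ≡ b (mod p), and r + s ≡ r' + s' ≡ t (mod p). Then r ≡ r' and s ≡ s' (mod p). -/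
theorem decomposition_unique (p : ℕ) (hp : p.Prime) (hodd : p ≠ 2) (a b t r s r' s' : ℤ)
    (ht : ¬ (p : ℤ) ∣ t)
    (hf : t ^ 4 - 2 * (a + b) * t ^ 2 + (a - b) ^ 2 ≡ 0 [ZMOD (p : ℤ)])
    (hr : r ^ 2 ≡ a [ZMOD (p : ℤ)]) (hr' : r' ^ 2 ≡ a [ZMOD (p : ℤ)])
    (hs : s ^ 2 ≡ b [ZMOD (p : ℤ)]) (hs' : s' ^ 2 ≡ b [ZMOD (p : ℤ)])
    (hsum : r + s ≡ t [ZMOD (p : ℤ)]) (hsum' : r' + s' ≡ t [ZMOD (p : ℤ)]) :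
    r ≡ r' [ZMOD (p : ℤ)] ∧ s ≡ s' [ZMOD (p : ℤ)] := by
  haveI : Fact p.Prime := ⟨hp⟩
  have cast_of : ∀ x y : ℤ, x ≡ y [ZMOD (p : ℤ)] → ((x : ZMod p) = (y : ZMod p)) := by
    intro x y h
    exact (ZMod.intCast_eq_intCast_iff _ _ p).mpr h
  have hR := cast_of _ _ hr
  have hR' := cast_of _ _ hr'
  have hS := cast_of _ _ hs
  have hS' := cast_of _ _ hs'
  have hSum := cast_of _ _ hsum
  have hSum' := cast_of _ _ hsum'
  push_cast at hR hR' hS hS' hSum hSum'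
  have ht0 : (t : ZMod p) ≠ 0 := fun h => ht ((ZMod.intCast_zmod_eq_zero_iff_dvd t p).mp h)
  have h2 : (2 : ZMod p) ≠ 0 := by
    have : ((2 : ℕ) : ZMod p) ≠ 0 := by
      rw [Ne, ZMod.natCast_eq_zero_iff]
      intro hd
      exact hodd ((Nat.prime_dvd_prime_iff_eq hp Nat.prime_two).mp hd)
    simpa using this
  have key : ∀ R S : ZMod p, R ^ 2 = (a : ZMod p) → S ^ 2 = (b : ZMod p) →
      R + S = (t : ZMod p) → 2 * (t : ZMod p) * R = (t : ZMod p) ^ 2 + a - b := by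
    intro R S hA hB hT
    have hSdef : S = (t : ZMod p) - R := by linear_combination hT
    rw [hSdef] at hB
    linear_combination hA - hB
  have k1 := key _ _ hR hS hSum
  have k2 := key _ _ hR' hS' hSum'
  have hrr : (r : ZMod p) = (r' : ZMod p) := by
    have h2t : (2 : ZMod p) * (t : ZMod p) ≠ 0 := mul_ne_zero h2 ht0
    have : (2 : ZMod p) * (t : ZMod p) * ((r : ZMod p) - r') = 0 := by
      linear_combination k1 - k2
    rcases mul_eq_zero.mp this with h | h
    · exact absurd h h2t
    · linear_combination h
  have hss : (s : ZMod p) = (s' : ZMod p) := by linear_combination hSum - hSum' - hrr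
  exact ⟨(ZMod.intCast_eq_intCast_iff _ _ p).mp hrr,
    (ZMod.intCast_eq_intCast_iff _ _ p).mp hss⟩
end
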